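/- Surjective derivation with trivial invariants forces finiteness: let Q and A be finitely generated abelian groups with A a Q-module such that the submodule of Q-invariant elements A^Q is trivial. If there exists a surjective derivation δ : Q → A, then A is finite. -/

import Mathlib

section Aux

variable {A Q : Type*} [CommGroup A] [CommGroup Q]

/-- The "inner difference" `D_q a = ρ q a / a`. -/
private def Dd (ρ : Q →* MulAut A) (q : Q) (a : A) : A := ρ q a / a

variable (ρ : Q →* MulAut A) (δ : Q → A) (s : A → Q)

private theorem Dd_swap
    (hδ : ∀ q₁ q₂ : Q, δ (q₁ * q₂) = ρ q₂ (δ q₁) * δ q₂)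
    (q q' : Q) : Dd ρ q (δ q') = Dd ρ q' (δ q) := by
  have h : ρ q (δ q') * δ q = ρ q' (δ q) * δ q' := by
    rw [← hδ q' q, ← hδ q q', mul_comm q q']
  unfold Dd
  rw [div_eq_div_iff_mul_eq_mul]
  exact h

private theorem Dd_mul (q : Q) (a b : A) :
    Dd ρ q (a * b) = Dd ρ q a * Dd ρ q b := by
  simp only [Dd, map_mul, div_mul_div_comm]

private theorem Dd_one (q : Q) : Dd ρ q 1 = 1 := by simp [Dd]

private theorem Dd_dd (q q' : Q) (x : A) :
    Dd ρ q (Dd ρ q' x) = Dd ρ q' (Dd ρ q x) := by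
  have key : ρ q (ρ q' x) = ρ q' (ρ q x) := by
    rw [← MulAut.mul_apply, ← map_mul, mul_comm, map_mul, MulAut.mul_apply]
  simp only [Dd, map_div]
  rw [key]
  simp [div_eq_mul_inv, mul_inv, mul_comm, mul_left_comm, mul_assoc]

/-- `D_q` depends only on `δ q`, given surjectivity. -/
private theorem Dd_congr
    (hδ : ∀ q₁ q₂ : Q, δ (q₁ * q₂) = ρ q₂ (δ q₁) * δ q₂)
    (hs : ∀ a, δ (s a) = a) (q : Q) (a : A) :
    Dd ρ q a = Dd ρ (s (δ q)) a := by
  calc Dd ρ q a = Dd ρ q (δ (s a)) := by rw [hs]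
    _ = Dd ρ (s a) (δ q) := Dd_swap ρ δ hδ q (s a)
    _ = Dd ρ (s a) (δ (s (δ q))) := by rw [hs (δ q)]
    _ = Dd ρ (s (δ q)) (δ (s a)) := (Dd_swap ρ δ hδ (s (δ q)) (s a)).symm
    _ = Dd ρ (s (δ q)) a := by rw [hs a]

/-- The radical ring multiplication. -/
private def mA (a b : A) : A := Dd ρ (s b) a

private theorem mA_comm
    (hδ : ∀ q₁ q₂ : Q, δ (q₁ * q₂) = ρ q₂ (δ q₁) * δ q₂)
    (hs : ∀ a, δ (s a) = a) (a b : A) : mA ρ s a b = mA ρ s b a := by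
  unfold mA
  calc Dd ρ (s b) a = Dd ρ (s b) (δ (s a)) := by rw [hs]
    _ = Dd ρ (s a) (δ (s b)) := (Dd_swap ρ δ hδ (s a) (s b)).symm
    _ = Dd ρ (s a) b := by rw [hs]

private theorem mA_swap
    (hδ : ∀ q₁ q₂ : Q, δ (q₁ * q₂) = ρ q₂ (δ q₁) * δ q₂)
    (hs : ∀ a, δ (s a) = a) (a b : A) : mA ρ s a b = Dd ρ (s a) b := by
  rw [mA_comm ρ δ s hδ hs]; rfl

private theorem mA_one (b : A) : mA ρ s 1 b = 1 := Dd_one ρ (s b)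

private theorem mA_one'
    (hδ : ∀ q₁ q₂ : Q, δ (q₁ * q₂) = ρ q₂ (δ q₁) * δ q₂)
    (hs : ∀ a, δ (s a) = a) (a : A) : mA ρ s a 1 = 1 := by
  rw [mA_comm ρ δ s hδ hs]; exact mA_one ρ s a

private theorem mA_distrib_left (a a' b : A) :
    mA ρ s (a * a') b = mA ρ s a b * mA ρ s a' b := Dd_mul ρ (s b) a a'

private theorem mA_distrib_right
    (hδ : ∀ q₁ q₂ : Q, δ (q₁ * q₂) = ρ q₂ (δ q₁) * δ q₂)
    (hs : ∀ a, δ (s a) = a) (a b b' : A) :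
    mA ρ s a (b * b') = mA ρ s a b * mA ρ s a b' := by
  rw [mA_swap ρ δ s hδ hs, Dd_mul, ← mA_swap ρ δ s hδ hs, ← mA_swap ρ δ s hδ hs]

private theorem mA_assoc
    (hδ : ∀ q₁ q₂ : Q, δ (q₁ * q₂) = ρ q₂ (δ q₁) * δ q₂)
    (hs : ∀ a, δ (s a) = a) (a b c : A) :
    mA ρ s (mA ρ s a b) c = mA ρ s a (mA ρ s b c) := by
  rw [mA_swap ρ δ s hδ hs a b]
  rw [mA_swap ρ δ s hδ hs a (mA ρ s b c)]
  show Dd ρ (s c) (Dd ρ (s a) b) = Dd ρ (s a) (Dd ρ (s c) b)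
  exact Dd_dd ρ (s c) (s a) b

private theorem δ_one
    (hδ : ∀ q₁ q₂ : Q, δ (q₁ * q₂) = ρ q₂ (δ q₁) * δ q₂) : δ 1 = 1 := by
  have h := hδ 1 1
  rw [mul_one, map_one] at h
  have h2 : δ 1 = δ 1 * δ 1 := by simpa using h
  exact mul_left_cancel (show δ 1 * δ 1 = δ 1 * 1 by rw [mul_one, ← h2])

private theorem mA_quasi
    (hδ : ∀ q₁ q₂ : Q, δ (q₁ * q₂) = ρ q₂ (δ q₁) * δ q₂)
    (hs : ∀ a, δ (s a) = a) (a : A) :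
    ∃ b : A, a * b * mA ρ s a b = 1 := by
  refine ⟨δ ((s a)⁻¹), ?_⟩
  set b := δ ((s a)⁻¹) with hb
  have h1 : ρ ((s a)⁻¹) a * b = 1 := by
    have h := hδ (s a) ((s a)⁻¹)
    rw [mul_inv_cancel, δ_one ρ δ hδ, hs] at h
    exact h.symm
  have h2 : mA ρ s a b = ρ ((s a)⁻¹) a / a := by
    show Dd ρ (s b) a = _
    rw [hb, ← Dd_congr ρ δ s hδ hs ((s a)⁻¹) a]
    rfl
  rw [h2]
  calc a * b * (ρ ((s a)⁻¹) a / a)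
      = ρ ((s a)⁻¹) a * b * (a / a) := by
        simp [div_eq_mul_inv, mul_comm, mul_left_comm, mul_assoc]
    _ = 1 := by rw [h1, div_self', one_mul]

private theorem mA_ann
    (hδ : ∀ q₁ q₂ : Q, δ (q₁ * q₂) = ρ q₂ (δ q₁) * δ q₂)
    (hs : ∀ a, δ (s a) = a) (hinv : ∀ a : A, (∀ q : Q, ρ q a = a) → a = 1)
    (a : A) (h : ∀ b : A, mA ρ s a b = 1) : a = 1 := by
  apply hinv
  intro q
  have h1 : Dd ρ q a = 1 := by
    rw [Dd_congr ρ δ s hδ hs q a]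
    exact h (δ q)
  have : ρ q a / a = 1 := h1
  rwa [div_eq_one] at this

end Aux

private theorem int_isJacobsonRing : IsJacobsonRing ℤ := by
  rw [isJacobsonRing_iff_prime_eq]
  intro P hP
  rcases eq_or_ne P ⊥ with rfl | hbot
  · refine le_antisymm (fun x hx => ?_) Ideal.le_jacobson
    have h1 := (Ideal.mem_jacobson_bot.mp hx) 1
    have h2 := (Ideal.mem_jacobson_bot.mp hx) (-1)
    rw [Int.isUnit_iff] at h1 h2
    simp only [mul_one, mul_neg_one] at h1 h2
    have : x = 0 := by omega
    simp [this]
  · haveI := hP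
    exact Ideal.jacobson_eq_self_of_isMaximal (H := IsPrime.to_maximal_ideal hbot)

/-- If `A` and `Q` are finitely generated abelian groups, `A` a `Q`-module with trivial
invariants `A^Q = 1`, and there exists a surjective derivation `δ : Q → A`, then
`A` is finite. -/
theorem finite_of_surjective_derivation {A Q : Type*} [CommGroup A] [CommGroup Q]
    [Group.FG A] [Group.FG Q]
    (ρ : Q →* MulAut A)
    (hinv : ∀ a : A, (∀ q : Q, ρ q a = a) → a = 1)
    (δ : Q → A)
    (hδ : ∀ q₁ q₂ : Q, δ (q₁ * q₂) = ρ q₂ (δ q₁) * δ q₂)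
    (hsurj : Function.Surjective δ) :
    Finite A := by
  classical
  obtain ⟨s, hs⟩ : ∃ s : A → Q, ∀ a, δ (s a) = a :=
    ⟨Function.surjInv hsurj, Function.surjInv_eq hsurj⟩
  -- The radical ring structure on `Additive A`
  letI ringB : NonUnitalCommRing (Additive A) :=
    { Additive.addCommGroup with
      mul := fun x y => Additive.ofMul (mA ρ s x.toMul y.toMul)
      left_distrib := fun x y z =>
        congrArg Additive.ofMul (mA_distrib_right ρ δ s hδ hs x.toMul y.toMul z.toMul)
      right_distrib := fun x y z =>
        congrArg Additive.ofMul (mA_distrib_left ρ s x.toMul y.toMul z.toMul)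
      zero_mul := fun x => congrArg Additive.ofMul (mA_one ρ s x.toMul)
      mul_zero := fun x => congrArg Additive.ofMul (mA_one' ρ δ s hδ hs x.toMul)
      mul_assoc := fun x y z =>
        congrArg Additive.ofMul (mA_assoc ρ δ s hδ hs x.toMul y.toMul z.toMul)
      mul_comm := fun x y =>
        congrArg Additive.ofMul (mA_comm ρ δ s hδ hs x.toMul y.toMul) }
  -- quasi-regularity and trivial annihilator, in ring language
  have hquasi : ∀ x : Additive A, ∃ y : Additive A, x + y + x * y = 0 := by
    intro x
    obtain ⟨b, hb⟩ := mA_quasi ρ δ s hδ hs x.toMul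
    exact ⟨Additive.ofMul b, hb⟩
  have hann : ∀ x : Additive A, (∀ b : Additive A, x * b = 0) → x = 0 := by
    intro x h
    exact mA_ann ρ δ s hδ hs hinv x.toMul fun b => h (Additive.ofMul b)
  -- the unitization
  haveI : Module.Finite ℤ (Additive A) := Module.Finite.iff_addGroup_fg.mpr inferInstance
  haveI : Module.Finite ℤ (Unitization ℤ (Additive A)) := Module.Finite.equiv (Unitization.linearEquiv ℤ ℤ (Additive A)).symm
  haveI : IsNoetherian ℤ (Unitization ℤ (Additive A)) := inferInstance
  haveI : IsNoetherianRing (Unitization ℤ (Additive A)) := isNoetherian_of_tower ℤ inferInstance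
  haveI : IsJacobsonRing ℤ := int_isJacobsonRing
  haveI : IsJacobsonRing (Unitization ℤ (Additive A)) := isJacobsonRing_of_isIntegral (R := ℤ)
  -- every element of (the image of) B is in the Jacobson radical
  have hunit : ∀ z : Unitization ℤ (Additive A), z.fst = 0 → IsUnit (z + 1) := by
    intro z hz
    obtain ⟨x, rfl⟩ : ∃ x : Additive A, z = (↑x : Unitization ℤ (Additive A)) := by
      refine ⟨z.snd, ?_⟩
      conv_lhs => rw [← Unitization.inl_fst_add_inr_snd_eq z]
      rw [hz, Unitization.inl_zero, zero_add]
    obtain ⟨w, hw⟩ := hquasi x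
    refine @IsUnit.of_mul_eq_one _ _ ⟨fun h => (mul_comm (G := Unitization ℤ (Additive A)) _ _).trans h⟩ _ ((↑w : Unitization ℤ (Additive A)) + 1) ?_
    have hw' : x * w + (x + w) = 0 := by rw [← hw]; abel
    calc ((↑x : Unitization ℤ (Additive A)) + 1) * ((↑w : Unitization ℤ (Additive A)) + 1)
        = (↑x : Unitization ℤ (Additive A)) * ↑w + ((↑x : Unitization ℤ (Additive A)) + ↑w) + 1 := by ring
      _ = (↑(x * w + (x + w)) : Unitization ℤ (Additive A)) + 1 := by
          rw [Unitization.inr_add, Unitization.inr_mul, Unitization.inr_add]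
      _ = 1 := by rw [hw', Unitization.inr_zero, zero_add]
  have hjacmem : ∀ x : Additive A, (↑x : Unitization ℤ (Additive A)) ∈ Ideal.jacobson (⊥ : Ideal (Unitization ℤ (Additive A))) := by
    intro x
    rw [Ideal.mem_jacobson_bot (R := Unitization ℤ (Additive A))]
    intro y
    apply hunit
    rw [Unitization.fst_mul, Unitization.fst_inr, zero_mul]
  have hnr : nilradical (Unitization ℤ (Additive A)) = Ideal.jacobson (R := Unitization ℤ (Additive A)) (⊥ : Ideal (Unitization ℤ (Additive A))) := by
    have h := Ideal.radical_eq_jacobson (R := Unitization ℤ (Additive A)) (⊥ : Ideal (Unitization ℤ (Additive A)))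
    simpa [nilradical, Submodule.zero_eq_bot] using h
  have hmemN : ∀ x : Additive A,
      (↑x : Unitization ℤ (Additive A)) ∈ nilradical (Unitization ℤ (Additive A)) := fun x => by
    rw [hnr]; exact hjacmem x
  have hfst0 : ∀ x : Unitization ℤ (Additive A), x ∈ nilradical (Unitization ℤ (Additive A)) → x.fst = 0 := by
    intro x hx
    have hnil : IsNilpotent x := mem_nilradical.mp hx
    have : IsNilpotent x.fst := hnil.map (Unitization.fstHom ℤ (Additive A)).toRingHom
    exact this.eq_zero
  -- descending induction on powers of the nilradical
  have step : ∀ k : ℕ, nilradical (Unitization ℤ (Additive A)) ^ (k + 1) = ⊥ →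
      nilradical (Unitization ℤ (Additive A)) = ⊥ := by
    intro k
    induction k with
    | zero => intro h; rwa [pow_one] at h
    | succ k ih =>
      intro h
      apply ih
      rw [eq_bot_iff]
      intro x hx
      have hxN : x ∈ nilradical (Unitization ℤ (Additive A)) := Ideal.pow_le_self (Nat.succ_ne_zero k) hx
      have hfst : x.fst = 0 := hfst0 x hxN
      have hx2 : x = (↑x.snd : Unitization ℤ (Additive A)) := by
        conv_lhs => rw [← Unitization.inl_fst_add_inr_snd_eq x]
        rw [hfst, Unitization.inl_zero, zero_add]
      have hsnd : x.snd = 0 := by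
        apply hann
        intro b
        have hmem : x * (↑b : Unitization ℤ (Additive A)) ∈ nilradical (Unitization ℤ (Additive A)) ^ (k + 2) := by
          rw [pow_succ]
          exact Ideal.mul_mem_mul hx (hmemN b)
        rw [h] at hmem
        have h0 : x * (↑b : Unitization ℤ (Additive A)) = 0 := Ideal.mem_bot.mp hmem
        rw [hx2, ← Unitization.inr_mul] at h0
        exact Unitization.inr_injective (h0.trans (Unitization.inr_zero ℤ).symm)
      rw [hx2, hsnd, Unitization.inr_zero]
      exact Ideal.zero_mem ⊥
  obtain ⟨n, hn⟩ := IsNoetherianRing.isNilpotent_nilradical (Unitization ℤ (Additive A))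
  have hNbot : nilradical (Unitization ℤ (Additive A)) = ⊥ := by
    apply step n
    rw [pow_succ]
    have hn' : nilradical (Unitization ℤ (Additive A)) ^ n = ⊥ := hn
    rw [hn', Ideal.bot_mul]
  have htriv : ∀ a : A, a = 1 := by
    intro a
    have h1 : (↑(Additive.ofMul a) : Unitization ℤ (Additive A)) ∈ (⊥ : Ideal (Unitization ℤ (Additive A))) := hNbot ▸ hmemN (Additive.ofMul a)
    have h2 : (↑(Additive.ofMul a) : Unitization ℤ (Additive A)) = 0 := Ideal.mem_bot.mp h1
    have h3 : Additive.ofMul a = (0 : Additive A) :=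
      Unitization.inr_injective (h2.trans (Unitization.inr_zero ℤ).symm)
    exact h3
  haveI : Subsingleton A := subsingleton_of_forall_eq 1 htriv
  exact Finite.of_subsingleton
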